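/- The relation 'x is not separated from z' on a topological space is reflexive and symmetric, but there exists a (non-Hausdorff) 1-dimensional topological manifold on which it fails to be transitive. -/

import Mathlib

/-- Two points of a topological space are non-separated if every open neighborhood of
one meets every open neighborhood of the other. -/
def NonSeparated {X : Type*} [TopologicalSpace X] (x z : X) : Prop :=
  ∀ U W : Set X, IsOpen U → IsOpen W → x ∈ U → z ∈ W → (U ∩ W).Nonempty

/-- A (possibly non-Hausdorff) 1-dimensional topological manifold. -/
def IsTopManifold1 (V : Type*) [TopologicalSpace V] : Prop :=
  ∀ x : V, ∃ U : Set V, IsOpen U ∧ x ∈ U ∧ Nonempty (U ≃ₜ ℝ)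

namespace Star3

/-- Gluing relation: `(t,0) ~ (t,1)` for `t < 0`, `(t,1) ~ (t,2)` for `t > 0`. -/
def rel (a b : ℝ × Fin 3) : Prop :=
  a = b ∨ (a.1 = b.1 ∧ ((a.1 < 0 ∧ ((a.2 = 0 ∧ b.2 = 1) ∨ (a.2 = 1 ∧ b.2 = 0))) ∨
    (0 < a.1 ∧ ((a.2 = 1 ∧ b.2 = 2) ∨ (a.2 = 2 ∧ b.2 = 1)))))

theorem rel_refl (a : ℝ × Fin 3) : rel a a := Or.inl rfl

theorem rel_symm {a b : ℝ × Fin 3} (h : rel a b) : rel b a := by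
  rcases h with h | ⟨h1, h2⟩
  · exact Or.inl h.symm
  · right
    refine ⟨h1.symm, ?_⟩
    rw [← h1]
    tauto

theorem rel_trans {a b c : ℝ × Fin 3} (hab : rel a b) (hbc : rel b c) : rel a c := by
  rcases hab with h | ⟨h1, h2⟩
  · rwa [h]
  · rcases hbc with h | ⟨h1', h2'⟩
    · rw [← h]; exact Or.inr ⟨h1, h2⟩
    · rw [← h1] at h1' h2'
      rcases h2 with ⟨hneg, h2⟩ | ⟨hpos, h2⟩ <;>
        rcases h2' with ⟨hneg', h2'⟩ | ⟨hpos', h2'⟩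
      · left
        ext
        · exact h1'
        · rcases h2 with ⟨e1, e2⟩ | ⟨e1, e2⟩ <;> rcases h2' with ⟨e1', e2'⟩ | ⟨e1', e2'⟩ <;>
            simp_all
      · exact absurd hpos' (not_lt.2 hneg.le)
      · exact absurd hneg' (not_lt.2 hpos.le)
      · left
        ext
        · exact h1'
        · rcases h2 with ⟨e1, e2⟩ | ⟨e1, e2⟩ <;> rcases h2' with ⟨e1', e2'⟩ | ⟨e1', e2'⟩ <;>
            simp_all

instance setoid : Setoid (ℝ × Fin 3) :=
  ⟨rel, ⟨rel_refl, rel_symm, rel_trans⟩⟩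

/-- The star with three branches. -/
def X : Type := Quotient setoid

instance : TopologicalSpace X := instTopologicalSpaceQuotient

/-- Embedding of the `i`-th copy of the line. -/
def f (i : Fin 3) (t : ℝ) : X := Quotient.mk setoid (t, i)

theorem continuous_f (i : Fin 3) : Continuous (f i) :=
  continuous_quotient_mk'.comp (Continuous.prodMk continuous_id continuous_const)

theorem f_inj (i : Fin 3) : Function.Injective (f i) := by
  intro t s h
  have := Quotient.exact h
  rcases this with h' | ⟨h1, h2⟩
  · exact congrArg Prod.fst h'
  · exfalso
    rcases h2 with ⟨_, ⟨e1, e2⟩ | ⟨e1, e2⟩⟩ | ⟨_, ⟨e1, e2⟩ | ⟨e1, e2⟩⟩ <;> simp_all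

theorem isOpen_slices {A : Set (ℝ × Fin 3)} (h : ∀ j : Fin 3, IsOpen {t : ℝ | (t, j) ∈ A}) :
    IsOpen A := by
  have hA : A = ⋃ j : Fin 3, {t : ℝ | (t, j) ∈ A} ×ˢ ({j} : Set (Fin 3)) := by
    ext ⟨t, j⟩
    simp only [Set.mem_iUnion, Set.mem_prod, Set.mem_setOf_eq, Set.mem_singleton_iff]
    aesop
  rw [hA]
  exact isOpen_iUnion fun j => (h j).prod (isOpen_discrete _)

theorem isOpen_const_set (P : Prop) : IsOpen {_t : ℝ | P} := by
  by_cases h : P <;> simp [h]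

theorem preimage_image (i : Fin 3) (S : Set ℝ) :
    Quotient.mk setoid ⁻¹' (f i '' S) =
      {p : ℝ × Fin 3 | p.1 ∈ S ∧ (p.2 = i ∨
        (p.1 < 0 ∧ ((p.2 = 0 ∧ i = 1) ∨ (p.2 = 1 ∧ i = 0))) ∨
        (0 < p.1 ∧ ((p.2 = 1 ∧ i = 2) ∨ (p.2 = 2 ∧ i = 1))))} := by
  ext ⟨t, j⟩
  simp only [Set.mem_preimage, Set.mem_image, Set.mem_setOf_eq]
  constructor
  · rintro ⟨s, hs, hq⟩
    have := Quotient.exact (Quotient.sound (Quotient.exact hq) : (⟦(s, i)⟧ : X) = ⟦(t, j)⟧)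
    rcases Quotient.exact hq.symm with h' | ⟨h1, h2⟩
    · obtain ⟨rfl, rfl⟩ := Prod.mk.injEq .. ▸ Prod.ext_iff.1 h'
      exact ⟨hs, Or.inl rfl⟩
    · simp only at h1 h2
      subst h1
      exact ⟨hs, Or.inr h2⟩
  · rintro ⟨hS, hcond⟩
    refine ⟨t, hS, ?_⟩
    rcases hcond with rfl | hc
    · rfl
    · exact (Quotient.sound (Or.inr ⟨rfl, by tauto⟩) : (⟦(t, i)⟧ : X) = ⟦(t, j)⟧)

theorem isOpenMap_f (i : Fin 3) : IsOpenMap (f i) := by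
  intro S hS
  refine (isOpen_coinduced (β := X) (f := Quotient.mk setoid)).2
    (?_ : IsOpen (Quotient.mk setoid ⁻¹' (f i '' S)))
  · rw [preimage_image]
    apply isOpen_slices
    intro j
    have : {t : ℝ | (t, j) ∈ {p : ℝ × Fin 3 | p.1 ∈ S ∧ (p.2 = i ∨
        (p.1 < 0 ∧ ((p.2 = 0 ∧ i = 1) ∨ (p.2 = 1 ∧ i = 0))) ∨
        (0 < p.1 ∧ ((p.2 = 1 ∧ i = 2) ∨ (p.2 = 2 ∧ i = 1))))}} =
        (S ∩ {_t : ℝ | j = i}) ∪ ((S ∩ Set.Iio 0) ∩ {_t : ℝ | (j = 0 ∧ i = 1) ∨ (j = 1 ∧ i = 0)})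
          ∪ ((S ∩ Set.Ioi 0) ∩ {_t : ℝ | (j = 1 ∧ i = 2) ∨ (j = 2 ∧ i = 1)}) := by
      ext t
      simp only [Set.mem_setOf_eq, Set.mem_union, Set.mem_inter_iff, Set.mem_Iio, Set.mem_Ioi]
      tauto
    rw [this]
    exact (((hS.inter (isOpen_const_set _)).union
      (((hS.inter isOpen_Iio).inter (isOpen_const_set _)))).union
      ((hS.inter isOpen_Ioi).inter (isOpen_const_set _)))

theorem isOpenEmbedding_f (i : Fin 3) : Topology.IsOpenEmbedding (f i) :=
  Topology.IsOpenEmbedding.of_continuous_injective_isOpenMap (continuous_f i) (f_inj i) (isOpenMap_f i)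

theorem manifold : IsTopManifold1 X := by
  intro x
  obtain ⟨⟨t, i⟩, rfl⟩ := x.exists_rep
  refine ⟨Set.range (f i), (isOpenEmbedding_f i).isOpen_range, ⟨t, rfl⟩, ?_⟩
  exact ⟨((isOpenEmbedding_f i).toIsEmbedding.toHomeomorph).symm⟩

theorem nonSep_adjacent {i j : Fin 3} (t0 : ℝ)
    (hrel : ∀ t : ℝ, t ∈ Set.Ioo (min t0 0) (max t0 0) → f i t = f j t) (ht0 : t0 ≠ 0) :
    NonSeparated (f i 0) (f j 0) := by
  intro U W hU hW hiU hjW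
  have hUo : IsOpen (f i ⁻¹' U) := hU.preimage (continuous_f i)
  have hWo : IsOpen (f j ⁻¹' W) := hW.preimage (continuous_f j)
  have hmem : (f i ⁻¹' U) ∩ (f j ⁻¹' W) ∈ nhds (0 : ℝ) :=
    Filter.inter_mem (hUo.mem_nhds hiU) (hWo.mem_nhds hjW)
  obtain ⟨ε, hε, hball⟩ := Metric.mem_nhds_iff.1 hmem
  rcases lt_or_gt_of_ne ht0 with h | h
  · set t := max (t0 / 2) (-(ε / 2)) with ht
    have hle : -(ε / 2) ≤ t := le_max_right _ _
    have htneg : t < 0 := max_lt (by linarith) (by linarith)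
    have htball : t ∈ Metric.ball (0 : ℝ) ε := by
      rw [Real.ball_eq_Ioo]
      simp only [zero_sub, zero_add, Set.mem_Ioo]
      exact ⟨by linarith, by linarith⟩
    have htIoo : t ∈ Set.Ioo (min t0 0) (max t0 0) := by
      rw [min_eq_left h.le, max_eq_right h.le]
      exact ⟨lt_max_of_lt_left (by linarith), htneg⟩
    obtain ⟨h1, h2⟩ := hball htball
    exact ⟨f i t, h1, (hrel t htIoo) ▸ h2⟩
  · set t := min (t0 / 2) (ε / 2) with ht
    have hle : t ≤ ε / 2 := min_le_right _ _
    have htpos : 0 < t := lt_min (by linarith) (by linarith)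
    have htball : t ∈ Metric.ball (0 : ℝ) ε := by
      rw [Real.ball_eq_Ioo]
      simp only [zero_sub, zero_add, Set.mem_Ioo]
      exact ⟨by linarith, by linarith⟩
    have htIoo : t ∈ Set.Ioo (min t0 0) (max t0 0) := by
      rw [min_eq_right h.le, max_eq_left h.le]
      exact ⟨htpos, min_lt_of_left_lt (by linarith)⟩
    obtain ⟨h1, h2⟩ := hball htball
    exact ⟨f i t, h1, (hrel t htIoo) ▸ h2⟩

end Star3

/-- The non-separation relation is reflexive and symmetric on every topological space,
but there is a (non-Hausdorff) 1-dimensional topological manifold on which it fails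
to be transitive. -/
theorem nonSeparated_refl_symm_not_trans :
    (∀ (X : Type) (_ : TopologicalSpace X),
      Reflexive (NonSeparated (X := X)) ∧ Symmetric (NonSeparated (X := X))) ∧
    ∃ (V : Type) (_ : TopologicalSpace V),
      IsTopManifold1 V ∧ ¬ Transitive (NonSeparated (X := V)) := by
  constructor
  · intro X _
    constructor
    · intro x U W _ _ hx hz
      exact ⟨x, hx, hz⟩
    · intro x y h U W hU hW hxU hyW
      obtain ⟨p, h1, h2⟩ := h W U hW hU hyW hxU
      exact ⟨p, h2, h1⟩
  · refine ⟨Star3.X, inferInstance, Star3.manifold, fun htrans => ?_⟩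
    have h01 : NonSeparated (Star3.f 0 0) (Star3.f 1 0) := by
      apply Star3.nonSep_adjacent (-1) _ (by norm_num)
      intro t ht
      simp only [min_eq_left (by norm_num : (-1:ℝ) ≤ 0), max_eq_right (by norm_num : (-1:ℝ) ≤ 0),
        Set.mem_Ioo] at ht
      exact Quotient.sound (Or.inr ⟨rfl, Or.inl ⟨ht.2, Or.inl ⟨rfl, rfl⟩⟩⟩)
    have h12 : NonSeparated (Star3.f 1 0) (Star3.f 2 0) := by
      apply Star3.nonSep_adjacent 1 _ (by norm_num)
      intro t ht
      simp only [min_eq_right (by norm_num : (0:ℝ) ≤ 1), max_eq_left (by norm_num : (0:ℝ) ≤ 1),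
        Set.mem_Ioo] at ht
      exact Quotient.sound (Or.inr ⟨rfl, Or.inr ⟨ht.1, Or.inl ⟨rfl, rfl⟩⟩⟩)
    have h02 : NonSeparated (Star3.f 0 0) (Star3.f 2 0) := htrans h01 h12
    obtain ⟨x, hx0, hx2⟩ := h02 (Set.range (Star3.f 0)) (Set.range (Star3.f 2))
      (Star3.isOpenEmbedding_f 0).isOpen_range (Star3.isOpenEmbedding_f 2).isOpen_range
      ⟨0, rfl⟩ ⟨0, rfl⟩
    obtain ⟨s, rfl⟩ := hx0
    obtain ⟨u, hu⟩ := hx2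
    have := Quotient.exact hu
    rcases this with h' | ⟨h1, h2⟩
    · exact absurd (congrArg Prod.snd h') (by simp)
    · rcases h2 with ⟨_, ⟨e1, e2⟩ | ⟨e1, e2⟩⟩ | ⟨_, ⟨e1, e2⟩ | ⟨e1, e2⟩⟩ <;> simp_all
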